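/- Let a > 0, b > 0 and let ν be a real number with ν > 1/2. Then ∫₀^∞ [x² / ((x²+a²)(x²+b²))]^ν dx = 4^{ν−1} Γ(ν+1/2) Γ(ν−1/2) / (Γ(2ν) (a+b)^{2ν−1}). -/

import Mathlib

open MeasureTheory Set


lemma beta_real {p q : ℝ} (hp : 0 < p) (hq : 0 < q) :
    ∫ x in Ioo (0:ℝ) 1, x ^ (p - 1) * (1 - x) ^ (q - 1)
      = Real.Gamma p * Real.Gamma q / Real.Gamma (p + q) := by
  have h := Complex.Gamma_mul_Gamma_eq_betaIntegral (s := (p:ℂ)) (t := (q:ℂ))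
    (by simpa using hp) (by simpa using hq)
  have hbeta : Complex.betaIntegral p q
      = ((∫ x in Ioo (0:ℝ) 1, x ^ (p - 1) * (1 - x) ^ (q - 1) : ℝ) : ℂ) := by
    rw [Complex.betaIntegral]
    have : (∫ x in Ioo (0:ℝ) 1, x ^ (p - 1) * (1 - x) ^ (q - 1))
        = ∫ x in (0:ℝ)..1, x ^ (p - 1) * (1 - x) ^ (q - 1) := by
      rw [intervalIntegral.integral_of_le zero_le_one, ← integral_Ioc_eq_integral_Ioo]
    rw [this, ← intervalIntegral.integral_ofReal]
    apply intervalIntegral.integral_congr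
    intro x hx
    rw [uIcc_of_le zero_le_one] at hx
    obtain ⟨hx0, hx1⟩ := hx
    push_cast
    rw [Complex.ofReal_cpow hx0, Complex.ofReal_cpow (by linarith : (0:ℝ) ≤ 1 - x)]
    push_cast
    ring
  rw [hbeta, ← Complex.ofReal_add, Complex.Gamma_ofReal, Complex.Gamma_ofReal,
    Complex.Gamma_ofReal, ← Complex.ofReal_mul, ← Complex.ofReal_mul] at h
  have hre := Complex.ofReal_injective h
  have hG : Real.Gamma (p + q) ≠ 0 := (Real.Gamma_pos_of_pos (by linarith)).ne'
  rw [eq_div_iff hG]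
  linarith [hre]

lemma integral_one_add_sq_rpow {ν : ℝ} (hν : 1 / 2 < ν) :
    ∫ t in Ioi (0:ℝ), ((1:ℝ) + t ^ 2) ^ (-ν)
      = Real.sqrt Real.pi * Real.Gamma (ν - 1 / 2) / (2 * Real.Gamma ν) := by
  have key : ∫ x in Ioo (0:ℝ) 1, x ^ ((1:ℝ)/2 - 1) * (1 - x) ^ ((ν - 1/2) - 1)
      = ∫ t in Ioi (0:ℝ), (2:ℝ) * ((1:ℝ) + t ^ 2) ^ (-ν) := by
    have himg : (fun t : ℝ => t ^ 2 / (1 + t ^ 2)) '' Ioi 0 = Ioo 0 1 := by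
      ext y
      constructor
      · rintro ⟨t, ht, rfl⟩
        have ht0 : (0:ℝ) < t := ht
        have h1 : (0:ℝ) < 1 + t ^ 2 := by positivity
        constructor
        · positivity
        · rw [div_lt_one h1]; nlinarith
      · rintro ⟨hy0, hy1⟩
        refine ⟨Real.sqrt (y / (1 - y)), ?_, ?_⟩
        · have : (0:ℝ) < y / (1 - y) := div_pos hy0 (by linarith)
          simpa using Real.sqrt_pos.mpr this
        · have h1y : (0:ℝ) < 1 - y := by linarith
          have hsq : Real.sqrt (y / (1 - y)) ^ 2 = y / (1 - y) :=
            Real.sq_sqrt (le_of_lt (div_pos hy0 h1y))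
          simp only
          rw [hsq]
          field_simp
          ring
    have hderiv : ∀ t ∈ Ioi (0:ℝ),
        HasDerivWithinAt (fun t : ℝ => t ^ 2 / (1 + t ^ 2))
          (2 * t / (1 + t ^ 2) ^ 2) (Ioi 0) t := by
      intro t ht
      have h1 : (1:ℝ) + t ^ 2 ≠ 0 := by positivity
      have := (hasDerivAt_pow 2 t).div (((hasDerivAt_pow 2 t).const_add 1)) h1
      exact (this.congr_deriv (by norm_num; ring)).hasDerivWithinAt
    have hinj : InjOn (fun t : ℝ => t ^ 2 / (1 + t ^ 2)) (Ioi 0) := by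
      have : StrictMonoOn (fun t : ℝ => t ^ 2 / (1 + t ^ 2)) (Ioi 0) := by
        intro x hx y hy hxy
        have hx0 : (0:ℝ) < x := hx
        have hy0 : (0:ℝ) < y := hy
        have h1 : (0:ℝ) < 1 + x ^ 2 := by positivity
        have h2 : (0:ℝ) < 1 + y ^ 2 := by positivity
        simp only
        rw [div_lt_div_iff₀ h1 h2]
        nlinarith
      exact this.injOn
    have := integral_image_eq_integral_abs_deriv_smul measurableSet_Ioi hderiv hinj
      (fun x => x ^ ((1:ℝ)/2 - 1) * (1 - x) ^ ((ν - 1/2) - 1))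
    rw [himg] at this
    rw [this]
    apply setIntegral_congr_fun measurableSet_Ioi
    intro t ht
    have ht0 : (0:ℝ) < t := ht
    have h1 : (0:ℝ) < 1 + t ^ 2 := by positivity
    have habs : |2 * t / (1 + t ^ 2) ^ 2| = 2 * t / (1 + t ^ 2) ^ 2 := by
      rw [abs_of_pos]; positivity
    have h1mt : (1:ℝ) - t ^ 2 / (1 + t ^ 2) = (1 + t ^ 2)⁻¹ := by
      field_simp
      ring
    simp only [smul_eq_mul, habs, h1mt]
    set u : ℝ := 1 + t ^ 2 with hu_def
    have hu : (0:ℝ) < u := h1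
    have hu2 : u ^ (2:ℕ) = u ^ (2:ℝ) := by
      rw [← Real.rpow_natCast u 2]; norm_num
    have ht2 : (t:ℝ) ^ (2:ℕ) = t ^ (2:ℝ) := by
      rw [← Real.rpow_natCast t 2]; norm_num
    rw [hu2, ht2]
    rw [Real.div_rpow (by positivity) hu.le,
      ← Real.rpow_mul ht0.le,
      Real.inv_rpow hu.le, ← Real.rpow_neg hu.le]
    rw [div_eq_mul_inv (t ^ (2 * ((1:ℝ)/2 - 1))), ← Real.rpow_neg hu.le]
    rw [div_eq_mul_inv (2 * t), ← Real.rpow_neg hu.le]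
    have htt : (t:ℝ) = t ^ (1:ℝ) := (Real.rpow_one t).symm
    calc 2 * t * u ^ (-(2:ℝ)) *
          (t ^ (2 * ((1:ℝ)/2 - 1)) * u ^ (-((1:ℝ)/2 - 1)) * u ^ (-(ν - 1/2 - 1)))
        = 2 * (t ^ (1:ℝ) * t ^ (2 * ((1:ℝ)/2 - 1))) *
          (u ^ (-(2:ℝ)) * u ^ (-((1:ℝ)/2 - 1)) * u ^ (-(ν - 1/2 - 1))) := by
          rw [← htt]; ring
      _ = 2 * u ^ (-ν) := by
          rw [← Real.rpow_add ht0, ← Real.rpow_add hu, ← Real.rpow_add hu]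
          rw [show (1:ℝ) + 2 * ((1:ℝ)/2 - 1) = 0 by ring,
            show -(2:ℝ) + -((1:ℝ)/2 - 1) + -(ν - 1/2 - 1) = -ν by ring,
            Real.rpow_zero, mul_one]
  have hbeta : ∫ x in Ioo (0:ℝ) 1, x ^ ((1:ℝ)/2 - 1) * (1 - x) ^ ((ν - 1/2) - 1)
      = Real.Gamma (1/2) * Real.Gamma (ν - 1/2) / Real.Gamma ν := by
    rw [beta_real (by norm_num) (by linarith)]
    rw [show (1:ℝ)/2 + (ν - 1/2) = ν by ring]
  rw [key, integral_const_mul, Real.Gamma_one_half_eq] at hbeta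
  rw [show (Real.sqrt Real.pi * Real.Gamma (ν - 1 / 2) / (2 * Real.Gamma ν) : ℝ)
      = Real.sqrt Real.pi * Real.Gamma (ν - 1 / 2) / Real.Gamma ν / 2 by ring]
  rw [← hbeta]
  ring

lemma integral_sq_add_sq_rpow {c ν : ℝ} (hc : 0 < c) (hν : 1 / 2 < ν) :
    ∫ u in Ioi (0:ℝ), (u ^ 2 + c ^ 2) ^ (-ν)
      = c ^ (1 - 2*ν) * (Real.sqrt Real.pi * Real.Gamma (ν - 1 / 2) / (2 * Real.Gamma ν)) := by
  have h := integral_comp_mul_left_Ioi (fun u : ℝ => (u ^ 2 + c ^ 2) ^ (-ν)) 0 hc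
  rw [mul_zero] at h
  simp only [smul_eq_mul] at h
  have congr1 : ∫ x in Ioi (0:ℝ), ((c * x) ^ 2 + c ^ 2) ^ (-ν)
      = ∫ x in Ioi (0:ℝ), c ^ (-2*ν) * ((1:ℝ) + x ^ 2) ^ (-ν) := by
    apply setIntegral_congr_fun measurableSet_Ioi
    intro x hx
    show ((c * x) ^ 2 + c ^ 2) ^ (-ν) = c ^ (-2*ν) * ((1:ℝ) + x ^ 2) ^ (-ν)
    rw [show ((c * x) ^ 2 + c ^ 2 : ℝ) = c ^ (2:ℕ) * (1 + x ^ 2) by ring]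
    rw [Real.mul_rpow (by positivity) (by positivity)]
    congr 1
    rw [← Real.rpow_natCast c 2, ← Real.rpow_mul hc.le]
    norm_num
  rw [congr1, integral_const_mul] at h
  have : ∫ u in Ioi (0:ℝ), (u ^ 2 + c ^ 2) ^ (-ν)
      = c * (c ^ (-2*ν) * ∫ x in Ioi (0:ℝ), ((1:ℝ) + x ^ 2) ^ (-ν)) := by
    rw [h, ← mul_assoc, mul_inv_cancel₀ hc.ne', one_mul]
  rw [this, integral_one_add_sq_rpow hν, ← mul_assoc]
  congr 1
  rw [show (1 - 2*ν : ℝ) = 1 + (-2*ν) by ring, Real.rpow_add hc, Real.rpow_one]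

lemma glasser {m c ν : ℝ} (hm : 0 < m) (hc : 0 < c) (hν : 1 / 2 < ν) :
    ∫ x in Ioi (0:ℝ), ((x - m / x) ^ 2 + c ^ 2) ^ (-ν)
      = ∫ u in Ioi (0:ℝ), (u ^ 2 + c ^ 2) ^ (-ν) := by
  set g : ℝ → ℝ := fun u => (u ^ 2 + c ^ 2) ^ (-ν) with hg_def
  have hgpos : ∀ u : ℝ, 0 < u ^ 2 + c ^ 2 := fun u => by positivity
  have hgcont : Continuous g := by
    apply Continuous.rpow_const
    · continuity
    · intro u; exact Or.inl (hgpos u).ne'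
  have hgnonneg : ∀ u, 0 ≤ g u := fun u => Real.rpow_nonneg (hgpos u).le _
  have hgeven : ∀ u, g (-u) = g u := fun u => by simp [hg_def, neg_sq]
  -- integrability of g on ℝ
  have hbound : Integrable (fun u : ℝ => ((1:ℝ) + u ^ 2) ^ (-ν)) := by
    have h2ν : (1:ℝ) < 2 * ν := by linarith
    have h := integrable_rpow_neg_one_add_norm_sq (E := ℝ) (μ := volume) (r := 2 * ν)
      (by simpa using h2ν)
    have heq : (fun x : ℝ => ((1:ℝ) + ‖x‖ ^ 2) ^ (-(2 * ν) / 2))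
        = fun u : ℝ => ((1:ℝ) + u ^ 2) ^ (-ν) := by
      funext x
      rw [Real.norm_eq_abs, sq_abs, show (-(2 * ν) / 2 : ℝ) = -ν by ring]
    rwa [heq] at h
  have hKpos : (0:ℝ) < min 1 (c ^ 2) := lt_min one_pos (by positivity)
  have hgInt : Integrable g := by
    apply Integrable.mono' (hbound.const_mul ((min 1 (c ^ 2)) ^ (-ν)))
      hgcont.aestronglyMeasurable
    filter_upwards with u
    rw [Real.norm_eq_abs, abs_of_nonneg (hgnonneg u)]
    have hle : min 1 (c ^ 2) * (1 + u ^ 2) ≤ u ^ 2 + c ^ 2 := by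
      have h1 : min 1 (c ^ 2) ≤ c ^ 2 := min_le_right _ _
      have h2 : min 1 (c ^ 2) * u ^ 2 ≤ u ^ 2 := by
        nlinarith [min_le_left 1 (c ^ 2), sq_nonneg u]
      nlinarith
    calc g u = (u ^ 2 + c ^ 2) ^ (-ν) := rfl
      _ ≤ (min 1 (c ^ 2) * (1 + u ^ 2)) ^ (-ν) :=
          Real.rpow_le_rpow_of_nonpos (by positivity) hle (by linarith)
      _ = (min 1 (c ^ 2)) ^ (-ν) * ((1:ℝ) + u ^ 2) ^ (-ν) :=
          Real.mul_rpow hKpos.le (by positivity)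
  -- the map φ x = x - m / x from (0,∞) onto ℝ
  set φ : ℝ → ℝ := fun x => x - m / x with hφ_def
  have hφderiv : ∀ x ∈ Ioi (0:ℝ),
      HasDerivWithinAt φ (1 + m / x ^ 2) (Ioi 0) x := by
    intro x hx
    have hx0 : (0:ℝ) < x := hx
    have h := (hasDerivAt_id x).sub (((hasDerivAt_inv hx0.ne').const_mul m))
    have : φ = fun x => x - m * x⁻¹ := by
      funext y; simp [hφ_def, div_eq_mul_inv]
    rw [this]
    exact (h.congr_deriv (by ring)).hasDerivWithinAt
  have hφinj : InjOn φ (Ioi 0) := by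
    have : StrictMonoOn φ (Ioi 0) := by
      intro x hx y hy hxy
      have hx0 : (0:ℝ) < x := hx
      have hy0 : (0:ℝ) < y := hy
      simp only [hφ_def]
      have : m / y < m / x := div_lt_div_of_pos_left hm hx0 hxy
      linarith
    exact this.injOn
  have hφimg : φ '' Ioi 0 = univ := by
    apply eq_univ_of_forall
    intro u
    set s := Real.sqrt (u ^ 2 + 4 * m) with hs_def
    have hs0 : |u| < s := by
      rw [hs_def, ← Real.sqrt_sq_eq_abs]
      exact Real.sqrt_lt_sqrt (sq_nonneg u) (by linarith)
    have hssq : s ^ 2 = u ^ 2 + 4 * m := Real.sq_sqrt (by positivity)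
    have hx0 : (0:ℝ) < (u + s) / 2 := by
      have : -u ≤ |u| := neg_le_abs u
      have : -u < s := lt_of_le_of_lt this hs0
      linarith
    refine ⟨(u + s) / 2, hx0, ?_⟩
    show (u + s) / 2 - m / ((u + s) / 2) = u
    have hne : ((u + s) / 2 : ℝ) ≠ 0 := hx0.ne'
    have hmd : m / ((u + s) / 2) = (u + s) / 2 - u := by
      rw [div_eq_iff hne]
      nlinarith [hssq]
    rw [hmd]
    ring
  -- change of variables for φ
  have hmain := integral_image_eq_integral_abs_deriv_smul measurableSet_Ioi hφderiv hφinj g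
  rw [hφimg, Measure.restrict_univ] at hmain
  -- the map ψ x = m / x from (0,∞) onto itself
  set ψ : ℝ → ℝ := fun x => m / x with hψ_def
  have hψderiv : ∀ x ∈ Ioi (0:ℝ),
      HasDerivWithinAt ψ (-(m / x ^ 2)) (Ioi 0) x := by
    intro x hx
    have hx0 : (0:ℝ) < x := hx
    have h := (hasDerivAt_inv hx0.ne').const_mul m
    have : ψ = fun x => m * x⁻¹ := by
      funext y; simp [hψ_def, div_eq_mul_inv]
    rw [this]
    exact (h.congr_deriv (by ring)).hasDerivWithinAt
  have hψinj : InjOn ψ (Ioi 0) := by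
    intro x hx y hy hxy
    have hx0 : (0:ℝ) < x := hx
    have hy0 : (0:ℝ) < y := hy
    simp only [hψ_def] at hxy
    rw [div_eq_div_iff hx0.ne' hy0.ne'] at hxy
    exact (mul_left_cancel₀ hm.ne' hxy).symm
  have hψimg : ψ '' Ioi 0 = Ioi 0 := by
    ext y
    constructor
    · rintro ⟨x, hx, rfl⟩
      exact div_pos hm hx
    · intro hy
      have hy0 : (0:ℝ) < y := hy
      exact ⟨m / y, div_pos hm hy0, by show m / (m / y) = y; field_simp⟩
  -- change of variables for ψ applied to g ∘ φ
  have hψmain := integral_image_eq_integral_abs_deriv_smul measurableSet_Ioi hψderiv hψinj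
    (fun u => g (φ u))
  rw [hψimg] at hψmain
  have hψcongr : ∫ x in Ioi (0:ℝ), |(-(m / x ^ 2))| • g (φ (ψ x))
      = ∫ x in Ioi (0:ℝ), (m / x ^ 2) * g (φ x) := by
    apply setIntegral_congr_fun measurableSet_Ioi
    intro x hx
    have hx0 : (0:ℝ) < x := hx
    have habs : |(-(m / x ^ 2))| = m / x ^ 2 := by
      rw [abs_neg, abs_of_pos (by positivity)]
    have hphi : φ (ψ x) = -(φ x) := by
      show m / x - m / (m / x) = -(x - m / x)
      have : m / (m / x) = x := by
        field_simp
      rw [this]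
      ring
    show |(-(m / x ^ 2))| • g (φ (ψ x)) = (m / x ^ 2) * g (φ x)
    rw [smul_eq_mul, habs, hphi, hgeven]
  -- integrability of the pulled-back function
  have hφcont : ContinuousOn φ (Ioi 0) :=
    continuousOn_id.sub (continuousOn_const.div continuousOn_id fun x hx => ne_of_gt hx)
  have hcont1 : ContinuousOn (fun x => g (φ x)) (Ioi 0) :=
    hgcont.comp_continuousOn hφcont
  have hcont2 : ContinuousOn (fun x : ℝ => (m / x ^ 2) * g (φ x)) (Ioi 0) := by
    apply ContinuousOn.mul _ hcont1
    exact continuousOn_const.div (continuousOn_pow 2) fun x hx => by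
      have : (0:ℝ) < x := hx; positivity
  have hInt : IntegrableOn (fun x => |1 + m / x ^ 2| • g (φ x)) (Ioi 0) := by
    rw [← integrableOn_image_iff_integrableOn_abs_deriv_smul measurableSet_Ioi hφderiv hφinj g,
      hφimg]
    exact hgInt.integrableOn
  have hF : ∀ x ∈ Ioi (0:ℝ), |1 + m / x ^ 2| • g (φ x)
      = g (φ x) + (m / x ^ 2) * g (φ x) := by
    intro x hx
    have hx0 : (0:ℝ) < x := hx
    rw [smul_eq_mul, abs_of_pos (by positivity)]
    ring
  have hInt' : IntegrableOn (fun x => g (φ x) + (m / x ^ 2) * g (φ x)) (Ioi 0) :=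
    hInt.congr_fun hF measurableSet_Ioi
  have hnn1 : ∀ x ∈ Ioi (0:ℝ), 0 ≤ g (φ x) := fun x _ => hgnonneg _
  have hnn2 : ∀ x ∈ Ioi (0:ℝ), 0 ≤ (m / x ^ 2) * g (φ x) := by
    intro x hx
    have hx0 : (0:ℝ) < x := hx
    exact mul_nonneg (by positivity) (hgnonneg _)
  have hIntF1 : IntegrableOn (fun x => g (φ x)) (Ioi 0) := by
    apply Integrable.mono' hInt' (hcont1.aestronglyMeasurable measurableSet_Ioi)
    rw [ae_restrict_iff' measurableSet_Ioi]
    filter_upwards with x hx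
    rw [Real.norm_eq_abs, abs_of_nonneg (hnn1 x hx)]
    linarith [hnn2 x hx]
  have hIntF2 : IntegrableOn (fun x : ℝ => (m / x ^ 2) * g (φ x)) (Ioi 0) := by
    apply Integrable.mono' hInt' (hcont2.aestronglyMeasurable measurableSet_Ioi)
    rw [ae_restrict_iff' measurableSet_Ioi]
    filter_upwards with x hx
    rw [Real.norm_eq_abs, abs_of_nonneg (hnn2 x hx)]
    linarith [hnn1 x hx]
  have hsplit : ∫ x in Ioi (0:ℝ), (g (φ x) + (m / x ^ 2) * g (φ x))
      = (∫ x in Ioi (0:ℝ), g (φ x)) + ∫ x in Ioi (0:ℝ), (m / x ^ 2) * g (φ x) :=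
    integral_add hIntF1 hIntF2
  have hcongr2 : ∫ x in Ioi (0:ℝ), |1 + m / x ^ 2| • g (φ x)
      = ∫ x in Ioi (0:ℝ), (g (φ x) + (m / x ^ 2) * g (φ x)) :=
    setIntegral_congr_fun measurableSet_Ioi hF
  have heven : ∫ x : ℝ, g x = 2 * ∫ x in Ioi (0:ℝ), g x := by
    rw [← integral_comp_abs (f := g)]
    congr 1
    funext x
    show ((x:ℝ) ^ 2 + c ^ 2) ^ (-ν) = ((|x|) ^ 2 + c ^ 2) ^ (-ν)
    rw [sq_abs]
  show (∫ x in Ioi (0:ℝ), g (φ x)) = ∫ u in Ioi (0:ℝ), g u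
  have h1 : (∫ x in Ioi (0:ℝ), g (φ x)) = ∫ x in Ioi (0:ℝ), (m / x ^ 2) * g (φ x) := by
    rw [hψmain, ← hψcongr]
  linarith [hmain, hsplit, hcongr2, heven, h1]

/-- For `a,b > 0` and `ν > 1/2`:
`∫₀^∞ [x²/((x²+a²)(x²+b²))]^ν dx = 4^{ν−1}Γ(ν+1/2)Γ(ν−1/2)/(Γ(2ν)(a+b)^{2ν−1})`. -/
theorem integral_rpow_sq_over_product (a b ν : ℝ) (ha : 0 < a) (hb : 0 < b)
    (hν : 1 / 2 < ν) :
    ∫ x in Ioi (0:ℝ), (x ^ 2 / ((x ^ 2 + a ^ 2) * (x ^ 2 + b ^ 2))) ^ ν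
      = (4:ℝ) ^ (ν - 1) * Real.Gamma (ν + 1 / 2) * Real.Gamma (ν - 1 / 2) /
          (Real.Gamma (2 * ν) * (a + b) ^ (2 * ν - 1)) := by
  have hab : (0:ℝ) < a + b := by linarith
  have hm : (0:ℝ) < a * b := mul_pos ha hb
  have hpt : ∫ x in Ioi (0:ℝ), (x ^ 2 / ((x ^ 2 + a ^ 2) * (x ^ 2 + b ^ 2))) ^ ν
      = ∫ x in Ioi (0:ℝ), ((x - a * b / x) ^ 2 + (a + b) ^ 2) ^ (-ν) := by
    apply setIntegral_congr_fun measurableSet_Ioi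
    intro x hx
    have hx0 : (0:ℝ) < x := hx
    have hpos : (0:ℝ) < (x - a * b / x) ^ 2 + (a + b) ^ 2 := by positivity
    have hbase : x ^ 2 / ((x ^ 2 + a ^ 2) * (x ^ 2 + b ^ 2))
        = ((x - a * b / x) ^ 2 + (a + b) ^ 2)⁻¹ := by
      rw [inv_eq_one_div, div_eq_div_iff (by positivity) hpos.ne']
      field_simp
      ring
    show (x ^ 2 / ((x ^ 2 + a ^ 2) * (x ^ 2 + b ^ 2))) ^ ν
        = ((x - a * b / x) ^ 2 + (a + b) ^ 2) ^ (-ν)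
    rw [hbase, Real.inv_rpow hpos.le, ← Real.rpow_neg hpos.le]
  rw [hpt, glasser hm hab hν, integral_sq_add_sq_rpow hab hν]
  -- Gamma algebra
  have hdup := Real.Gamma_mul_Gamma_add_half ν
  have hΓν : (0:ℝ) < Real.Gamma ν := Real.Gamma_pos_of_pos (by linarith)
  have hΓ2 : (0:ℝ) < Real.Gamma (ν + 1/2) := Real.Gamma_pos_of_pos (by linarith)
  have hΓ3 : (0:ℝ) < Real.Gamma (ν - 1/2) := Real.Gamma_pos_of_pos (by linarith)
  have hS : (0:ℝ) < Real.sqrt Real.pi := Real.sqrt_pos.mpr Real.pi_pos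
  have hP : (0:ℝ) < (a + b) ^ (2 * ν - 1) := Real.rpow_pos_of_pos hab _
  have hX : (0:ℝ) < (2:ℝ) ^ (1 - 2 * ν) := Real.rpow_pos_of_pos two_pos _
  have h2 : Real.Gamma (2 * ν)
      = Real.Gamma ν * Real.Gamma (ν + 1/2) / ((2:ℝ) ^ (1 - 2 * ν) * Real.sqrt Real.pi) := by
    rw [eq_div_iff (by positivity)]
    rw [hdup]; ring
  have hPinv : (a + b) ^ (1 - 2 * ν) = ((a + b) ^ (2 * ν - 1))⁻¹ := by
    rw [show (1 - 2 * ν : ℝ) = -(2 * ν - 1) by ring, Real.rpow_neg hab.le]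
  have h24 : (4:ℝ) ^ (ν - 1) * (2 * (2:ℝ) ^ (1 - 2 * ν)) = 1 := by
    have h4 : (4:ℝ) = (2:ℝ) ^ (2:ℝ) := by
      rw [show (2:ℝ) = ((2:ℕ):ℝ) by norm_num, Real.rpow_natCast]; norm_num
    have h2' : (2:ℝ) = (2:ℝ) ^ (1:ℝ) := (Real.rpow_one 2).symm
    rw [h4, ← Real.rpow_mul (by norm_num : (0:ℝ) ≤ 2)]
    nth_rewrite 3 [h2']
    rw [← Real.rpow_add two_pos, ← Real.rpow_add two_pos,
      show (2 * (ν - 1) + (1 + (1 - 2 * ν)) : ℝ) = 0 by ring, Real.rpow_zero]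
  rw [h2, hPinv]
  field_simp
  linear_combination (-Real.Gamma ((2 * ν - 1) / 2)) * h24
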